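/- The bounding number 𝔟 is at most the unsplitting number 𝔯. -/
import Mathlib


open Cardinal

/-- `X` splits the infinite set `Y`. -/
def Splits (X Y : Set ℕ) : Prop := (Y ∩ X).Infinite ∧ (Y \ X).Infinite

/-- The bounding number 𝔟: least cardinality of an unbounded family in `(ℕ → ℕ, ≤*)`. -/
noncomputable def boundingNumber : Cardinal :=
  sInf { c | ∃ B : Set (ℕ → ℕ),
    (¬ ∃ g : ℕ → ℕ, ∀ f ∈ B, ∀ᶠ n in Filter.atTop, f n ≤ g n) ∧ c = #B }

/-- The unsplitting (reaping) number 𝔯: least cardinality of a family of infinite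
subsets of ℕ not simultaneously split by any single set. -/
noncomputable def unsplittingNumber : Cardinal :=
  sInf { c | ∃ R : Set (Set ℕ),
    (∀ Y ∈ R, Y.Infinite) ∧ (¬ ∃ X : Set ℕ, ∀ Y ∈ R, Splits X Y) ∧ c = #R }

open Classical in
/-- The next element of `Y` above `n`. -/
noncomputable def nxt (Y : Set ℕ) (n : ℕ) : ℕ :=
  if h : ∃ m, m ∈ Y ∧ n < m then Nat.find h else 0

open Classical in
lemma nxt_spec {Y : Set ℕ} (hY : Y.Infinite) (n : ℕ) :
    nxt Y n ∈ Y ∧ n < nxt Y n := by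
  have h : ∃ m, m ∈ Y ∧ n < m := by
    obtain ⟨m, hm, hlt⟩ := hY.exists_gt n
    exact ⟨m, hm, hlt⟩
  rw [nxt]
  rw [dif_pos h]
  exact Nat.find_spec h

/-- Fast-growing sequence built from `g`. -/
def seqA (g : ℕ → ℕ) : ℕ → ℕ
  | 0 => 0
  | k+1 => seqA g k + g (seqA g k) + 1

lemma seqA_mono (g : ℕ → ℕ) : StrictMono (seqA g) :=
  strictMono_nat_of_lt_succ fun k => by simp only [seqA]; omega

lemma g_lt_seqA (g : ℕ → ℕ) (k : ℕ) : g (seqA g k) < seqA g (k+1) := by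
  simp only [seqA]; omega

lemma le_seqA (g : ℕ → ℕ) (k : ℕ) : k ≤ seqA g k :=
  (seqA_mono g).le_apply

lemma interval_eq {g : ℕ → ℕ} {i j m : ℕ}
    (hi : seqA g i < m ∧ m < seqA g (i+1))
    (hj : seqA g j < m ∧ m < seqA g (j+1)) : i = j := by
  by_contra h
  rcases Nat.lt_or_ge i j with h' | h'
  · have := (seqA_mono g).monotone (Nat.succ_le_of_lt h')
    simp only [Nat.succ_eq_add_one] at this
    omega
  · have h'' : j < i := lt_of_le_of_ne h' (Ne.symm h)
    have := (seqA_mono g).monotone (Nat.succ_le_of_lt h'')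
    simp only [Nat.succ_eq_add_one] at this
    omega

/-- 𝔟 ≤ 𝔯. -/
theorem stmt2 : boundingNumber ≤ unsplittingNumber := by
  apply le_csInf
  · -- the defining set for 𝔯 is nonempty: take all infinite sets
    refine ⟨#{Y : Set ℕ | Y.Infinite}, {Y | Y.Infinite}, fun Y hY => hY, ?_, rfl⟩
    rintro ⟨X, hX⟩
    by_cases hXi : X.Infinite
    · exact absurd (hX X hXi).2 (by simp)
    · have := (hX Set.univ Set.infinite_univ).1
      rw [Set.univ_inter] at this
      exact hXi this
  · rintro c ⟨R, hRinf, hRns, rfl⟩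
    set B := (fun Y => nxt Y) '' R with hB
    have hBub : ¬ ∃ g : ℕ → ℕ, ∀ f ∈ B, ∀ᶠ n in Filter.atTop, f n ≤ g n := by
      rintro ⟨g, hg⟩
      apply hRns
      refine ⟨{m | ∃ k, seqA g (2*k) < m ∧ m < seqA g (2*k+1)}, ?_⟩
      intro Y hY
      have hYinf := hRinf Y hY
      have hgY := hg (nxt Y) ⟨Y, hY, rfl⟩
      rw [Filter.eventually_atTop] at hgY
      obtain ⟨N, hN⟩ := hgY
      constructor
      · -- Y ∩ X infinite
        apply Set.infinite_of_not_bddAbove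
        rintro ⟨b, hb⟩
        set a := seqA g (2 * (max N b)) with ha
        have haN : N ≤ a := le_trans (le_trans (le_max_left N b) (by omega))
          (le_seqA g (2 * max N b))
        have hab : b ≤ a := le_trans (le_trans (le_max_right N b) (by omega))
          (le_seqA g (2 * max N b))
        set y := nxt Y a with hy
        obtain ⟨hyY, hya⟩ := nxt_spec hYinf a
        have hyg : y ≤ g a := hN a haN
        have hyu : y < seqA g (2 * max N b + 1) := lt_of_le_of_lt hyg (g_lt_seqA g _)
        have hyX : y ∈ Y ∩ {m | ∃ k, seqA g (2*k) < m ∧ m < seqA g (2*k+1)} :=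
          ⟨hyY, ⟨max N b, hya, hyu⟩⟩
        have := hb hyX
        omega
      · -- Y \ X infinite
        apply Set.infinite_of_not_bddAbove
        rintro ⟨b, hb⟩
        set a := seqA g (2 * (max N b) + 1) with ha
        have haN : N ≤ a := le_trans (le_trans (le_max_left N b) (by omega))
          (le_seqA g (2 * max N b + 1))
        have hab : b ≤ a := le_trans (le_trans (le_max_right N b) (by omega))
          (le_seqA g (2 * max N b + 1))
        set y := nxt Y a with hy
        obtain ⟨hyY, hya⟩ := nxt_spec hYinf a
        have hyg : y ≤ g a := hN a haN
        have hyu : y < seqA g (2 * max N b + 1 + 1) := lt_of_le_of_lt hyg (g_lt_seqA g _)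
        have hyX : y ∉ {m | ∃ k, seqA g (2*k) < m ∧ m < seqA g (2*k+1)} := by
          rintro ⟨k, hk1, hk2⟩
          have := interval_eq (g := g) ⟨hk1, hk2⟩ ⟨hya, hyu⟩
          omega
        have := hb ⟨hyY, hyX⟩
        omega
    calc boundingNumber ≤ #B := csInf_le' ⟨B, hBub, rfl⟩
      _ ≤ #R := Cardinal.mk_image_le
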